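/- arXiv:0709.1316 — 3 statements merged into one kernel-verified Lean document; each statement's English description precedes it below -/
import Mathlib

section
/- Let G be a locally compact Hausdorff topological group with right Haar measure μ, and let (Λ_λ) be a Følner net in G, i.e. a net of Borel subsets of G with 0 < μ(Λ_λ) < ∞ for every λ and lim_λ μ(Λ_λ Δ (Λ_λ g))/μ(Λ_λ) = 0 for every g ∈ G. Let H be a complex Hilbert space and let U : G → B(H) satisfy ‖U_g‖ ≤ 1 and U_g U_h = U_{gh} for all g, h ∈ G, and assume that for each x ∈ H the map g ↦ U_g x is strongly (Bochner) measurable. Let V = {x ∈ H : U_g x = x for all g ∈ G} and let P be the orthogonal projection of H onto V. Then for every x ∈ H, the Bochner integral averages (1/μ(Λ_λ)) ∫_{Λ_λ} U_g x dμ(g) converge in the norm of H to Px. -/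
open Filter MeasureTheory
open scoped InnerProductSpace Topology ENNReal

/-- Mean ergodic theorem (1.1): for a right-Haar measure `μ` on a locally compact
Hausdorff group `G`, a Følner net `(Λ_λ)`, and a strongly measurable contraction
representation `U` of `G` on a complex Hilbert space `H`, the Bochner integral
averages `(1/μ(Λ_λ)) ∫_{Λ_λ} U_g x dμ(g)` converge in norm to `P x`, where `P` is
the orthogonal projection onto the fixed subspace `V = {x : U_g x = x ∀ g}`. -/
theorem mean_ergodic_theorem_folner_net
    {G : Type*} [Group G] [TopologicalSpace G] [IsTopologicalGroup G]
    [LocallyCompactSpace G] [T2Space G] [MeasurableSpace G] [BorelSpace G]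
    (μ : Measure G) [μ.Regular] [μ.IsMulRightInvariant] (hμ : μ ≠ 0)
    {ι : Type*} [Preorder ι] [IsDirected ι (· ≤ ·)] [Nonempty ι]
    (Λ : ι → Set G) (hΛmeas : ∀ i, MeasurableSet (Λ i))
    (hΛpos : ∀ i, 0 < μ (Λ i)) (hΛfin : ∀ i, μ (Λ i) < ∞)
    (hFolner : ∀ g : G,
      Tendsto (fun i => μ (symmDiff (Λ i) ((· * g) '' Λ i)) / μ (Λ i))
        atTop (𝓝 0))
    {H : Type*} [NormedAddCommGroup H] [InnerProductSpace ℂ H] [CompleteSpace H]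
    (U : G → H →L[ℂ] H)
    (hUcontr : ∀ g, ‖U g‖ ≤ 1)
    (hUmul : ∀ g h : G, U g ∘L U h = U (g * h))
    (hUmeas : ∀ x : H, StronglyMeasurable fun g => U g x)
    (P : H →L[ℂ] H)
    (hPmem : ∀ x : H, ∀ g : G, U g (P x) = P x)
    (hPorth : ∀ x v : H, (∀ g : G, U g v = v) → ⟪x - P x, v⟫_ℂ = 0) :
    ∀ x : H,
      Tendsto (fun i => (μ (Λ i)).toReal⁻¹ • ∫ g in Λ i, U g x ∂μ)
        atTop (𝓝 (P x)) := by
  intro x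
  have hnormU : ∀ (g : G) (y : H), ‖U g y‖ ≤ ‖y‖ := by
    intro g y
    calc ‖U g y‖ ≤ ‖U g‖ * ‖y‖ := (U g).le_opNorm y
    _ ≤ 1 * ‖y‖ := by
        have := hUcontr g
        have := norm_nonneg y
        nlinarith
    _ = ‖y‖ := one_mul _
  have hint : ∀ (i : ι) (y : H), IntegrableOn (fun g => U g y) (Λ i) μ := by
    intro i y
    refine Integrable.mono' (g := fun _ => ‖y‖)
      (integrableOn_const (hΛfin i).ne)
      ((hUmeas y).aestronglyMeasurable.restrict) ?_
    exact Eventually.of_forall fun g => hnormU g y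
  set c : ι → ℝ := fun i => (μ (Λ i)).toReal with hc
  have hcpos : ∀ i, 0 < c i := fun i => ENNReal.toReal_pos (hΛpos i).ne' (hΛfin i).ne
  set A : ι → H → H := fun i y => (c i)⁻¹ • ∫ g in Λ i, U g y ∂μ with hAdef
  have hA_add : ∀ (i : ι) (y z : H), A i (y + z) = A i y + A i z := by
    intro i y z
    have h1 : (∫ g in Λ i, U g (y + z) ∂μ)
        = (∫ g in Λ i, U g y ∂μ) + ∫ g in Λ i, U g z ∂μ := by
      rw [← integral_add (hint i y) (hint i z)]
      exact integral_congr_ae (Eventually.of_forall fun g => map_add (U g) y z)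
    simp only [hAdef, h1, smul_add]
  have hA_smul : ∀ (i : ι) (a : ℂ) (y : H), A i (a • y) = a • A i y := by
    intro i a y
    have h1 : (∫ g in Λ i, U g (a • y) ∂μ) = a • ∫ g in Λ i, U g y ∂μ := by
      rw [← integral_smul]
      exact integral_congr_ae (Eventually.of_forall fun g => map_smul (U g) a y)
    simp only [hAdef, h1, smul_comm ((c i)⁻¹) a]
  have hA_norm : ∀ (i : ι) (y : H), ‖A i y‖ ≤ ‖y‖ := by
    intro i y
    have h1 : ‖∫ g in Λ i, U g y ∂μ‖ ≤ ‖y‖ * c i :=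
      norm_setIntegral_le_of_norm_le_const (hΛfin i) (fun g _ => hnormU g y)
    have hx : ‖A i y‖ = (c i)⁻¹ * ‖∫ g in Λ i, U g y ∂μ‖ := by
      rw [show A i y = (c i)⁻¹ • ∫ g in Λ i, U g y ∂μ from rfl, norm_smul,
        Real.norm_eq_abs, abs_of_pos (inv_pos.2 (hcpos i))]
    rw [hx]
    calc (c i)⁻¹ * ‖∫ g in Λ i, U g y ∂μ‖ ≤ (c i)⁻¹ * (‖y‖ * c i) := by
          exact mul_le_mul_of_nonneg_left h1 (inv_pos.2 (hcpos i)).le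
    _ = ‖y‖ := by
          rw [mul_comm ‖y‖ (c i), ← mul_assoc, inv_mul_cancel₀ (hcpos i).ne', one_mul]
  have hA_fix : ∀ (i : ι) (y : H), (∀ g, U g y = y) → A i y = y := by
    intro i y hy
    have h1 : (∫ g in Λ i, U g y ∂μ) = (c i) • y := by
      rw [show (fun g => U g y) = fun _ : G => y from funext hy]
      simp [hc, setIntegral_const, Measure.real]
    simp [hAdef, h1, smul_smul, inv_mul_cancel₀ (hcpos i).ne']
  -- the key estimate on generators
  have hgen : ∀ (g₀ : G) (y : H),
      Tendsto (fun i => A i (U g₀ y - y)) atTop (𝓝 0) := by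
    intro g₀ y
    set B : ι → Set G := fun i => (· * g₀) '' Λ i with hB
    have hBmeas : ∀ i, MeasurableSet (B i) :=
      fun i => (MeasurableEquiv.mulRight g₀).measurableEmbedding.measurableSet_image.2
        (hΛmeas i)
    have hBpre : ∀ i, B i = (· * g₀⁻¹) ⁻¹' (Λ i) := by
      intro i
      ext z
      constructor
      · rintro ⟨a, ha, rfl⟩; simpa using ha
      · intro hz; exact ⟨z * g₀⁻¹, hz, by simp⟩
    have hBfin : ∀ i, μ (B i) = μ (Λ i) := by
      intro i
      rw [hBpre i]
      exact (measurePreserving_mul_right μ g₀⁻¹).measure_preimage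
        (hΛmeas i).nullMeasurableSet
    have hshift : ∀ i, (∫ h in Λ i, U (h * g₀) y ∂μ) = ∫ h in B i, U h y ∂μ :=
      fun i => ((measurePreserving_mul_right μ g₀).setIntegral_image_emb
        (MeasurableEquiv.mulRight g₀).measurableEmbedding (fun h => U h y) (Λ i)).symm
    have hcomp : ∀ h : G, U h (U g₀ y - y) = U (h * g₀) y - U h y := by
      intro h
      rw [map_sub]
      congr 1
      exact ContinuousLinearMap.ext_iff.mp (hUmul h g₀) y
    -- integrability on B i
    have hintB : ∀ i, IntegrableOn (fun g => U g y) (B i) μ := by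
      intro i
      refine Integrable.mono' (g := fun _ => ‖y‖)
        (integrableOn_const (lt_top_iff_ne_top.1 ?_))
        ((hUmeas y).aestronglyMeasurable.restrict)
        (Eventually.of_forall fun g => hnormU g y)
      rw [hBfin i]; exact hΛfin i
    -- the value of the average
    have hval : ∀ i, A i (U g₀ y - y)
        = (c i)⁻¹ • ((∫ h in B i, U h y ∂μ) - ∫ h in Λ i, U h y ∂μ) := by
      intro i
      have h1 : (∫ h in Λ i, U h (U g₀ y - y) ∂μ)
          = (∫ h in Λ i, U (h * g₀) y ∂μ) - ∫ h in Λ i, U h y ∂μ := by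
        rw [show (fun h => U h (U g₀ y - y)) = fun h => U (h * g₀) y - U h y from
          funext hcomp]
        refine integral_sub ?_ (hint i y)
        · have : IntegrableOn (fun h => U h y) (B i) μ := hintB i
          have h2 := ((measurePreserving_mul_right μ g₀).integrableOn_image
            (MeasurableEquiv.mulRight g₀).measurableEmbedding).1 this
          exact h2
      simp only [hAdef, h1, hshift]
    -- norm estimate
    have hbound : ∀ i, ‖A i (U g₀ y - y)‖
        ≤ ‖y‖ * (μ (symmDiff (Λ i) (B i)) / μ (Λ i)).toReal := by
      intro i
      have hinter : MeasurableSet (Λ i ∩ B i) := (hΛmeas i).inter (hBmeas i)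
      have hsplitΛ : (∫ h in Λ i, U h y ∂μ)
          = (∫ h in Λ i \ B i, U h y ∂μ) + ∫ h in Λ i ∩ B i, U h y ∂μ := by
        rw [← setIntegral_union Set.disjoint_sdiff_inter hinter
          ((hint i y).mono_set Set.diff_subset) ((hint i y).mono_set Set.inter_subset_left),
          Set.diff_union_inter]
      have hsplitB : (∫ h in B i, U h y ∂μ)
          = (∫ h in B i \ Λ i, U h y ∂μ) + ∫ h in Λ i ∩ B i, U h y ∂μ := by
        rw [Set.inter_comm]
        rw [← setIntegral_union Set.disjoint_sdiff_inter ((hBmeas i).inter (hΛmeas i))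
          ((hintB i).mono_set Set.diff_subset) ((hintB i).mono_set Set.inter_subset_left),
          Set.diff_union_inter]
      have hdiff : (∫ h in B i, U h y ∂μ) - ∫ h in Λ i, U h y ∂μ
          = (∫ h in B i \ Λ i, U h y ∂μ) - ∫ h in Λ i \ B i, U h y ∂μ := by
        rw [hsplitΛ, hsplitB]; abel
      have hμ1 : μ (Λ i \ B i) < ∞ :=
        lt_of_le_of_lt (measure_mono Set.diff_subset) (hΛfin i)
      have hμ2 : μ (B i \ Λ i) < ∞ := by
        refine lt_of_le_of_lt (measure_mono Set.diff_subset) ?_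
        rw [hBfin i]; exact hΛfin i
      have hn1 : ‖∫ h in Λ i \ B i, U h y ∂μ‖ ≤ ‖y‖ * (μ (Λ i \ B i)).toReal :=
        norm_setIntegral_le_of_norm_le_const hμ1 (fun g _ => hnormU g y)
      have hn2 : ‖∫ h in B i \ Λ i, U h y ∂μ‖ ≤ ‖y‖ * (μ (B i \ Λ i)).toReal :=
        norm_setIntegral_le_of_norm_le_const hμ2 (fun g _ => hnormU g y)
      have hsymm : μ (symmDiff (Λ i) (B i)) = μ (Λ i \ B i) + μ (B i \ Λ i) := by
        rw [Set.symmDiff_def]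
        exact measure_union disjoint_sdiff_sdiff ((hBmeas i).diff (hΛmeas i))
      have hnorm : ‖(∫ h in B i, U h y ∂μ) - ∫ h in Λ i, U h y ∂μ‖
          ≤ ‖y‖ * (μ (symmDiff (Λ i) (B i))).toReal := by
        rw [hdiff, hsymm, ENNReal.toReal_add hμ1.ne hμ2.ne]
        calc ‖(∫ h in B i \ Λ i, U h y ∂μ) - ∫ h in Λ i \ B i, U h y ∂μ‖
            ≤ ‖∫ h in B i \ Λ i, U h y ∂μ‖ + ‖∫ h in Λ i \ B i, U h y ∂μ‖ :=
              norm_sub_le _ _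
        _ ≤ ‖y‖ * (μ (B i \ Λ i)).toReal + ‖y‖ * (μ (Λ i \ B i)).toReal :=
              add_le_add hn2 hn1
        _ = ‖y‖ * ((μ (Λ i \ B i)).toReal + (μ (B i \ Λ i)).toReal) := by ring
      rw [hval i, norm_smul]
      have hsd_ne : μ (symmDiff (Λ i) (B i)) ≠ ∞ := by
        rw [hsymm]
        exact (ENNReal.add_lt_top.2 ⟨hμ1, hμ2⟩).ne
      have : (μ (symmDiff (Λ i) (B i)) / μ (Λ i)).toReal
          = (c i)⁻¹ * (μ (symmDiff (Λ i) (B i))).toReal := by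
        rw [ENNReal.toReal_div]; rw [hc]; ring
      rw [this]
      have h0 : ‖(c i)⁻¹‖ = (c i)⁻¹ := abs_of_pos (inv_pos.2 (hcpos i))
      rw [h0]
      calc (c i)⁻¹ * ‖(∫ h in B i, U h y ∂μ) - ∫ h in Λ i, U h y ∂μ‖
          ≤ (c i)⁻¹ * (‖y‖ * (μ (symmDiff (Λ i) (B i))).toReal) :=
            mul_le_mul_of_nonneg_left hnorm (inv_pos.2 (hcpos i)).le
      _ = ‖y‖ * ((c i)⁻¹ * (μ (symmDiff (Λ i) (B i))).toReal) := by ring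
    -- conclude by squeezing
    have hto : Tendsto (fun i => ‖y‖ * (μ (symmDiff (Λ i) (B i)) / μ (Λ i)).toReal)
        atTop (𝓝 0) := by
      have h1 : Tendsto (fun i => (μ (symmDiff (Λ i) (B i)) / μ (Λ i)).toReal)
          atTop (𝓝 0) := by
        have h2 := (ENNReal.tendsto_toReal (a := 0) (by simp)).comp (hFolner g₀)
        rw [ENNReal.toReal_zero] at h2
        exact h2
      simpa using h1.const_mul ‖y‖
    exact squeeze_zero_norm hbound hto
  -- the span of the generators
  set S : Set H := {w | ∃ (g : G) (y : H), w = U g y - y} with hS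
  set K : Submodule ℂ H := Submodule.span ℂ S with hK
  have hspan : ∀ w ∈ K, Tendsto (fun i => A i w) atTop (𝓝 0) := by
    intro w hw
    refine Submodule.span_induction ?_ ?_ ?_ ?_ hw
    · rintro w ⟨g, y, rfl⟩
      exact hgen g y
    · have h0 : ∀ i, A i (0 : H) = 0 := by
        intro i
        have : (fun g : G => U g (0 : H)) = fun _ => (0 : H) := by
          funext g; simp
        simp [hAdef, this]
      simpa [h0] using tendsto_const_nhds (α := H) (x := 0) (f := atTop (α := ι))
    · intro y z _ _ hy hz
      have : (fun i => A i (y + z)) = fun i => A i y + A i z := funext fun i => hA_add i y z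
      rw [this]
      simpa using hy.add hz
    · intro a y _ hy
      have : (fun i => A i (a • y)) = fun i => a • A i y := funext fun i => hA_smul i a y
      rw [this]
      simpa using hy.const_smul a
  -- orthogonal complement of the span is the fixed space
  have hVmem : ∀ w ∈ Kᗮ, ∀ g, U g w = w := by
    intro w hw g
    have hadj : ContinuousLinearMap.adjoint (U g) w = w := by
      refine ext_inner_left ℂ fun y => ?_
      rw [ContinuousLinearMap.adjoint_inner_right]
      have h0 : ⟪U g y - y, w⟫_ℂ = 0 :=
        (Submodule.mem_orthogonal K w).1 hw _ (Submodule.subset_span ⟨g, y, rfl⟩)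
      rw [inner_sub_left, sub_eq_zero] at h0
      exact h0
    have h1 : ⟪U g w, w⟫_ℂ = ⟪w, w⟫_ℂ := by
      rw [← ContinuousLinearMap.adjoint_inner_right, hadj]
    have h2 : ‖U g w - w‖ ^ 2 ≤ 0 := by
      rw [norm_sub_sq (𝕜 := ℂ), h1, inner_self_eq_norm_sq]
      have h3 := hnormU g w
      nlinarith [norm_nonneg (U g w), norm_nonneg w]
    have h4 : ‖U g w - w‖ = 0 := by
      have := sq_nonneg ‖U g w - w‖
      nlinarith [norm_nonneg (U g w - w)]
    rw [← sub_eq_zero]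
    exact norm_eq_zero.1 h4
  -- x - P x lies in the closure of the span
  have hzK : x - P x ∈ K.topologicalClosure := by
    rw [← Submodule.orthogonal_orthogonal_eq_closure]
    refine (Submodule.mem_orthogonal _ _).2 fun w hw => ?_
    exact inner_eq_zero_symm.mp (hPorth x w (hVmem w hw))
  -- closure argument
  have hclos : Tendsto (fun i => A i (x - P x)) atTop (𝓝 0) := by
    rw [NormedAddCommGroup.tendsto_nhds_zero]
    intro ε hε
    have hzc : (x - P x) ∈ closure (K : Set H) := by
      rw [← Submodule.topologicalClosure_coe]
      exact hzK
    obtain ⟨w, hwK, hwz⟩ := Metric.mem_closure_iff.1 hzc (ε / 2) (by linarith)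
    have h1 := hspan w hwK
    rw [NormedAddCommGroup.tendsto_nhds_zero] at h1
    filter_upwards [h1 (ε / 2) (by linarith)] with i hi
    have hsplit : A i (x - P x) = A i (x - P x - w) + A i w := by
      rw [← hA_add, sub_add_cancel]
    calc ‖A i (x - P x)‖ ≤ ‖A i (x - P x - w)‖ + ‖A i w‖ := by
          rw [hsplit]; exact norm_add_le _ _
    _ ≤ ‖x - P x - w‖ + ‖A i w‖ := add_le_add_left (hA_norm i _) _
    _ < ε / 2 + ε / 2 := by
          have : ‖x - P x - w‖ = dist (x - P x) w := (dist_eq_norm _ _).symm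
          rw [this]
          exact add_lt_add hwz hi
    _ = ε := by ring
  -- conclude
  have hfinal : ∀ i, A i x = P x + A i (x - P x) := by
    intro i
    have h1 : P x + (x - P x) = x := by abel
    have h2 := hA_add i (P x) (x - P x)
    rw [h1] at h2
    rw [h2, hA_fix i (P x) (hPmem x)]
  have : Tendsto (fun i => P x + A i (x - P x)) atTop (𝓝 (P x + 0)) :=
    tendsto_const_nhds.add hclos
  rw [add_zero] at this
  exact (funext hfinal : (fun i => A i x) = _) ▸ this
end

section
/- Let G be a locally compact Hausdorff topological group with right Haar measure μ, and let (Λ_λ) be a Følner net in G, i.e. a net of Borel subsets of G with 0 < μ(Λ_λ) < ∞ for every λ and lim_λ μ(Λ_λ Δ (Λ_λ g))/μ(Λ_λ) = 0 for every g ∈ G. Let H be a complex Hilbert space and let U : G → B(H) satisfy ‖U_g‖ ≤ 1 and U_g U_h = U_{gh} for all g, h ∈ G, and assume that for all x, y ∈ H the function g ↦ ⟨y, U_g x⟩ is Borel measurable. Let V = {x ∈ H : U_g x = x for all g ∈ G} and let P be the orthogonal projection of H onto V. Then for all x, y ∈ H, lim_λ (1/μ(Λ_λ)) ∫_{Λ_λ}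 ⟨y, U_g x⟩ dμ(g) = ⟨y, Px⟩. -/
open Filter MeasureTheory
open scoped InnerProductSpace Topology ENNReal

/-- Weak mean ergodic theorem: for a right-Haar measure `μ` on a locally compact
Hausdorff group `G`, a Følner net `(Λ_λ)`, and a weakly measurable contraction
representation `U` of `G` on a complex Hilbert space `H`, one has
`(1/μ(Λ_λ)) ∫_{Λ_λ} ⟨y, U_g x⟩ dμ(g) → ⟨y, P x⟩` for all `x, y ∈ H`, where `P`
is the orthogonal projection onto `V = {x : U_g x = x ∀ g}`. -/
theorem weak_mean_ergodic_theorem_folner_net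
    {G : Type*} [Group G] [TopologicalSpace G] [IsTopologicalGroup G]
    [LocallyCompactSpace G] [T2Space G] [MeasurableSpace G] [BorelSpace G]
    (μ : Measure G) [μ.Regular] [μ.IsMulRightInvariant] (hμ : μ ≠ 0)
    {ι : Type*} [Preorder ι] [IsDirected ι (· ≤ ·)] [Nonempty ι]
    (Λ : ι → Set G) (hΛmeas : ∀ i, MeasurableSet (Λ i))
    (hΛpos : ∀ i, 0 < μ (Λ i)) (hΛfin : ∀ i, μ (Λ i) < ∞)
    (hFolner : ∀ g : G,
      Tendsto (fun i => μ (symmDiff (Λ i) ((· * g) '' Λ i)) / μ (Λ i))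
        atTop (𝓝 0))
    {H : Type*} [NormedAddCommGroup H] [InnerProductSpace ℂ H] [CompleteSpace H]
    (U : G → H →L[ℂ] H)
    (hUcontr : ∀ g, ‖U g‖ ≤ 1)
    (hUmul : ∀ g h : G, U g ∘L U h = U (g * h))
    (hUmeas : ∀ x y : H, Measurable fun g => ⟪y, U g x⟫_ℂ)
    (P : H →L[ℂ] H)
    (hPmem : ∀ x : H, ∀ g : G, U g (P x) = P x)
    (hPorth : ∀ x v : H, (∀ g : G, U g v = v) → ⟪x - P x, v⟫_ℂ = 0) :
    ∀ x y : H,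
      Tendsto (fun i => (μ (Λ i)).toReal⁻¹ • ∫ g in Λ i, ⟪y, U g x⟫_ℂ ∂μ)
        atTop (𝓝 ⟪y, P x⟫_ℂ) := by
  intro x y
  have hUnorm : ∀ (g : G) (v : H), ‖U g v‖ ≤ ‖v‖ := fun g v => by
    simpa using (U g).le_of_opNorm_le (hUcontr g) v
  have hbound : ∀ (v : H) (g : G), ‖⟪y, U g v⟫_ℂ‖ ≤ ‖y‖ * ‖v‖ := fun v g =>
    le_trans (norm_inner_le_norm _ _) (by
      have := hUnorm g v
      nlinarith [norm_nonneg y])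
  -- integrability on finite-measure measurable sets
  have hInt : ∀ (v : H) (s : Set G), MeasurableSet s → μ s < ∞ →
      IntegrableOn (fun g => ⟪y, U g v⟫_ℂ) s μ := by
    intro v s hs hsfin
    refine Integrable.mono' (g := fun _ => ‖y‖ * ‖v‖)
      (integrableOn_const hsfin.ne)
      ((hUmeas v y).aestronglyMeasurable.restrict)
      (Filter.Eventually.of_forall fun g => hbound v g)
  set F : ι → H → ℂ := fun i v => (μ (Λ i)).toReal⁻¹ • ∫ g in Λ i, ⟪y, U g v⟫_ℂ ∂μ with hF
  have hμtop : ∀ i, (μ (Λ i)).toReal ≠ 0 := fun i =>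
    (ENNReal.toReal_pos (hΛpos i).ne' (hΛfin i).ne).ne'
  -- bound on F
  have hFbound : ∀ (i : ι) (v : H), ‖F i v‖ ≤ ‖y‖ * ‖v‖ := by
    intro i v
    have h1 : ‖∫ g in Λ i, ⟪y, U g v⟫_ℂ ∂μ‖ ≤ (‖y‖ * ‖v‖) * (μ (Λ i)).toReal :=
      norm_setIntegral_le_of_norm_le_const (hΛfin i) (fun g _ => hbound v g)
    rw [hF]
    simp only [norm_smul, norm_inv, Real.norm_eq_abs,
      abs_of_nonneg ENNReal.toReal_nonneg]
    rw [inv_mul_le_iff₀ (lt_of_le_of_ne ENNReal.toReal_nonneg (Ne.symm (hμtop i)))]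
    linarith [h1]
  -- additivity of F
  have hFadd : ∀ (i : ι) (a b : H), F i (a + b) = F i a + F i b := by
    intro i a b
    rw [hF]
    simp only
    rw [← smul_add, ← integral_add (hInt a _ (hΛmeas i) (hΛfin i)) (hInt b _ (hΛmeas i) (hΛfin i))]
    congr 1
    refine setIntegral_congr_fun (hΛmeas i) fun g _ => ?_
    simp [inner_add_right]
  have hFsub : ∀ (i : ι) (a b : H), F i (a - b) = F i a - F i b := by
    intro i a b
    have h := hFadd i (a - b) b
    have hab : a - b + b = a := by abel
    rw [hab] at h
    linear_combination -h
  have hFsmul : ∀ (i : ι) (a : ℂ) (b : H), F i (a • b) = a * F i b := by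
    intro i a b
    rw [hF]
    simp only
    rw [show (∫ g in Λ i, ⟪y, U g (a • b)⟫_ℂ ∂μ) = a * ∫ g in Λ i, ⟪y, U g b⟫_ℂ ∂μ by
      rw [← integral_const_mul]
      refine setIntegral_congr_fun (hΛmeas i) fun g _ => ?_
      simp [inner_smul_right]]
    rw [← smul_eq_mul, ← smul_eq_mul, smul_comm]
  -- F of a fixed vector is constant
  have hFfix : ∀ (i : ι) (v : H), (∀ g, U g v = v) → F i v = ⟪y, v⟫_ℂ := by
    intro i v hv
    rw [hF]
    simp only
    rw [show (∫ g in Λ i, ⟪y, U g v⟫_ℂ ∂μ) = ∫ _ in Λ i, ⟪y, v⟫_ℂ ∂μ from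
      setIntegral_congr_fun (hΛmeas i) fun g _ => by rw [hv g]]
    rw [setIntegral_const, smul_smul, measureReal_def, inv_mul_cancel₀ (hμtop i), one_smul]
  -- the submodule spanned by the coboundaries
  set N : Submodule ℂ H := Submodule.span ℂ {w | ∃ g v, U g v - v = w} with hN
  set K : Submodule ℂ H := N.topologicalClosure with hK
  haveI : CompleteSpace K := N.isClosed_topologicalClosure.completeSpace_coe
  -- generators tend to zero
  have hgen : ∀ (h : G) (v : H), Tendsto (fun i => F i (U h v - v)) atTop (𝓝 0) := by
    intro h v
    have key : ∀ i, ‖F i (U h v - v)‖ ≤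
        (‖y‖ * ‖v‖) * (μ (symmDiff (Λ i) ((· * h) '' Λ i)) / μ (Λ i)).toReal := by
      intro i
      set A := Λ i with hA
      set B := (· * h) '' Λ i with hB
      have hmeasB : MeasurableSet B := by
        rw [hB, show (· * h) '' A = (· * h⁻¹) ⁻¹' A by
          ext g; simp [Set.mem_image, eq_comm, eq_mul_inv_iff_mul_eq]]
        exact (hΛmeas i).preimage (measurable_mul_const _)
      have hμB : μ B = μ A := by
        rw [hB, show (· * h) '' A = (· * h⁻¹) ⁻¹' A by
          ext g; simp [Set.mem_image, eq_comm, eq_mul_inv_iff_mul_eq]]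
        exact measure_preimage_mul_right μ h⁻¹ A
      -- rewrite the integral of the translated function
      have htrans : (∫ g in A, ⟪y, U g (U h v)⟫_ℂ ∂μ) = ∫ g in B, ⟪y, U g v⟫_ℂ ∂μ := by
        have hemb : MeasurableEmbedding (fun g : G => g * h) :=
          (MeasurableEquiv.mulRight h).measurableEmbedding
        have := hemb.setIntegral_map (μ := μ) (fun g => ⟪y, U g v⟫_ℂ) B
        rw [map_mul_right_eq_self μ h] at this
        rw [this]
        have hpre : (fun g : G => g * h) ⁻¹' B = A := by
          rw [hB]
          exact Set.preimage_image_eq _ (fun a b => by simp)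
        rw [hpre]
        refine setIntegral_congr_fun (hΛmeas i) fun g _ => ?_
        have : U g (U h v) = U (g * h) v := by
          rw [← hUmul g h]; rfl
        rw [this]
      have hfinB : μ B < ∞ := by rw [hμB]; exact hΛfin i
      -- split integrals
      set f : G → ℂ := fun g => ⟪y, U g v⟫_ℂ with hf
      have hIA : IntegrableOn f A μ := hInt v A (hΛmeas i) (hΛfin i)
      have hIB : IntegrableOn f B μ := hInt v B hmeasB hfinB
      have hsplitA : (∫ g in A, f g ∂μ) = (∫ g in A ∩ B, f g ∂μ) + ∫ g in A \ B, f g ∂μ := by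
        rw [← setIntegral_union (by rw [Set.disjoint_left]; rintro g ⟨-, hgB⟩ ⟨-, hgB'⟩; exact hgB' hgB) ((hΛmeas i).diff hmeasB)
          (hIA.mono_set Set.inter_subset_left) (hIA.mono_set Set.diff_subset),
          Set.inter_union_diff]
      have hsplitB : (∫ g in B, f g ∂μ) = (∫ g in A ∩ B, f g ∂μ) + ∫ g in B \ A, f g ∂μ := by
        rw [Set.inter_comm A B, ← setIntegral_union (by rw [Set.disjoint_left]; rintro g ⟨-, hgA⟩ ⟨-, hgA'⟩; exact hgA' hgA) (hmeasB.diff (hΛmeas i))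
          (hIB.mono_set Set.inter_subset_left) (hIB.mono_set Set.diff_subset),
          Set.inter_union_diff]
      have hFval : F i (U h v - v) = (μ (Λ i)).toReal⁻¹ •
          ((∫ g in B \ A, f g ∂μ) - ∫ g in A \ B, f g ∂μ) := by
        rw [hFsub, hF]
        simp only [← smul_sub]
        congr 1
        rw [htrans, hsplitB, hsplitA]
        ring
      rw [hFval]
      have hd1 : ‖∫ g in B \ A, f g ∂μ‖ ≤ (‖y‖ * ‖v‖) * (μ (B \ A)).toReal :=
        norm_setIntegral_le_of_norm_le_const (lt_of_le_of_lt (measure_mono Set.diff_subset) hfinB)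
          (fun g _ => hbound v g)
      have hd2 : ‖∫ g in A \ B, f g ∂μ‖ ≤ (‖y‖ * ‖v‖) * (μ (A \ B)).toReal :=
        norm_setIntegral_le_of_norm_le_const (lt_of_le_of_lt (measure_mono Set.diff_subset) (hΛfin i))
          (fun g _ => hbound v g)
      have hsd : (μ (symmDiff A B)).toReal = (μ (A \ B)).toReal + (μ (B \ A)).toReal := by
        rw [Set.symmDiff_def,
          measure_union (disjoint_sdiff_sdiff) (hmeasB.diff (hΛmeas i))]
        rw [ENNReal.toReal_add
          (lt_of_le_of_lt (measure_mono Set.diff_subset) (hΛfin i)).ne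
          (lt_of_le_of_lt (measure_mono Set.diff_subset) hfinB).ne]
      rw [ENNReal.toReal_div, norm_smul, norm_inv, Real.norm_eq_abs,
        abs_of_nonneg ENNReal.toReal_nonneg]
      rw [div_eq_mul_inv, ← mul_assoc]
      rw [mul_comm ((μ (Λ i)).toReal⁻¹)]
      gcongr
      calc ‖(∫ g in B \ A, f g ∂μ) - ∫ g in A \ B, f g ∂μ‖
          ≤ ‖∫ g in B \ A, f g ∂μ‖ + ‖∫ g in A \ B, f g ∂μ‖ := norm_sub_le _ _
        _ ≤ (‖y‖ * ‖v‖) * (μ (B \ A)).toReal + (‖y‖ * ‖v‖) * (μ (A \ B)).toReal := by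
            linarith
        _ = ‖y‖ * ‖v‖ * (μ (symmDiff A B)).toReal := by rw [hsd]; ring
    -- squeeze
    have hratio : Tendsto (fun i =>
        (‖y‖ * ‖v‖) * (μ (symmDiff (Λ i) ((· * h) '' Λ i)) / μ (Λ i)).toReal) atTop (𝓝 0) := by
      have := ((ENNReal.tendsto_toReal (by simp)).comp (hFolner h)).const_mul (‖y‖ * ‖v‖)
      simpa using this
    rw [tendsto_zero_iff_norm_tendsto_zero]
    exact squeeze_zero (fun i => norm_nonneg _) key hratio
  -- everything in the span tends to zero
  have hspan : ∀ w ∈ N, Tendsto (fun i => F i w) atTop (𝓝 0) := by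
    intro w hw
    induction hw using Submodule.span_induction with
    | mem w hw =>
        obtain ⟨g, v, rfl⟩ := hw
        exact hgen g v
    | zero =>
        have : ∀ i, F i 0 = 0 := by
          intro i
          have := hFsmul i 0 0
          simpa using this
        simpa [this] using tendsto_const_nhds (α := ℂ) (f := atTop (α := ι))
    | add a b _ _ ha hb =>
        have := ha.add hb
        simp only [hFadd]
        simp only [add_zero] at this
        exact this
    | smul a b _ hb =>
        have := hb.const_mul a
        simp only [hFsmul]
        simpa using this
  -- extend to the closure
  have hclos : ∀ w ∈ K, Tendsto (fun i => F i w) atTop (𝓝 0) := by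
    intro w hw
    rw [Metric.tendsto_nhds]
    intro ε hε
    have hεy : 0 < ε / (2 * (‖y‖ + 1)) := by positivity
    have hwc : w ∈ closure (N : Set H) := hw
    obtain ⟨w', hw'N, hw'close⟩ := Metric.mem_closure_iff.1 hwc _ hεy
    have hlim := hspan w' hw'N
    rw [Metric.tendsto_nhds] at hlim
    filter_upwards [hlim (ε / 2) (by positivity)] with i hi
    have h1 : ‖F i w - F i w'‖ ≤ ‖y‖ * ‖w - w'‖ := by
      rw [← hFsub]; exact hFbound i _
    have h2 : ‖w - w'‖ < ε / (2 * (‖y‖ + 1)) := by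
      rw [← dist_eq_norm]; exact hw'close
    have h3 : ‖y‖ * ‖w - w'‖ < ε / 2 := by
      calc ‖y‖ * ‖w - w'‖ ≤ (‖y‖ + 1) * ‖w - w'‖ := by nlinarith [norm_nonneg (w - w')]
        _ < (‖y‖ + 1) * (ε / (2 * (‖y‖ + 1))) := by
            have : (0:ℝ) < ‖y‖ + 1 := by positivity
            exact (mul_lt_mul_iff_right₀ this).2 h2
        _ = ε / 2 := by field_simp
    rw [dist_zero_right] at hi ⊢
    calc ‖F i w‖ ≤ ‖F i w'‖ + ‖F i w - F i w'‖ := by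
          have := norm_add_le (F i w') (F i w - F i w'); simpa using this
      _ < ε / 2 + ε / 2 := by linarith
      _ = ε := by ring
  -- x - P x lies in the closure K
  have hzK : x - P x ∈ K := by
    set z := x - P x with hz
    set z' := z - (K.orthogonalProjectionOnto z : H) with hz'
    have hz'orth : z' ∈ Kᗮ := by
      have := K.sub_starProjection_mem_orthogonal z; rwa [Submodule.starProjection_apply] at this
    have hfix : ∀ g, U g z' = z' := by
      intro g
      have hinner : ∀ v : H, ⟪U g v, z'⟫_ℂ = ⟪v, z'⟫_ℂ := by
        intro v
        have hmem : U g v - v ∈ K :=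
          N.le_topologicalClosure (Submodule.subset_span ⟨g, v, rfl⟩)
        have := (Submodule.mem_orthogonal K z').1 hz'orth _ hmem
        rw [inner_sub_left] at this
        linear_combination this
      have hre : RCLike.re ⟪U g z', z'⟫_ℂ = ‖z'‖ ^ 2 := by
        rw [hinner z']
        exact inner_self_eq_norm_sq (𝕜 := ℂ) z'
      have h2 : ‖U g z' - z'‖ ^ 2 ≤ 0 := by
        rw [norm_sub_sq (𝕜 := ℂ), hre]
        nlinarith [hUnorm g z', norm_nonneg z', norm_nonneg (U g z')]
      have h0 : ‖U g z' - z'‖ = 0 :=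
        le_antisymm (by nlinarith [norm_nonneg (U g z' - z')]) (norm_nonneg _)
      exact sub_eq_zero.1 (norm_eq_zero.1 h0)
    -- z' is orthogonal to itself
    have hz0 : ⟪z', z'⟫_ℂ = 0 := by
      have ha : ⟪z, z'⟫_ℂ = 0 := hPorth x z' hfix
      have hb : ⟪(K.orthogonalProjectionOnto z : H), z'⟫_ℂ = 0 :=
        (Submodule.mem_orthogonal K z').1 hz'orth _ (SetLike.coe_mem _)
      rw [hz', inner_sub_left, ha, hb, sub_zero]
    have : z' = 0 := inner_self_eq_zero.1 hz0
    have hzp : z = (K.orthogonalProjectionOnto z : H) := by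
      have h := this
      rw [hz'] at h
      exact sub_eq_zero.1 h
    rw [hzp]
    exact SetLike.coe_mem _
  -- assemble
  have hmain : Tendsto (fun i => F i (x - P x)) atTop (𝓝 0) := hclos _ hzK
  have hdecomp : ∀ i, F i x = ⟪y, P x⟫_ℂ + F i (x - P x) := by
    intro i
    have h := hFadd i (P x) (x - P x)
    have hx : P x + (x - P x) = x := by abel
    rw [hx] at h
    rw [h, hFfix i (P x) (hPmem x)]
  have hsum := (tendsto_const_nhds (x := ⟪y, P x⟫_ℂ) (f := atTop (α := ι))).add hmain
  rw [add_zero] at hsum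
  exact Tendsto.congr (fun i => (hdecomp i).symm) hsum
end

section
/- Let G be a locally compact Hausdorff topological group with right Haar measure μ. Let H be a complex Hilbert space and let U : G → B(H) satisfy ‖U_g‖ ≤ 1 and U_g U_h = U_{gh} for all g, h ∈ G, with g ↦ U_g x strongly (Bochner) measurable for each x ∈ H. Then for every x ∈ H, every h ∈ G and every Borel set Λ ⊆ G with μ(Λ) < ∞, one has ‖∫_Λ U_g (x − U_h x) dμ(g)‖ ≤ ‖x‖ · μ(Λ Δ (Λh)). In particular, if (Λ_λ) is a Følner net for G (a net of Borel sets with 0 < μ(Λ_λ) < ∞ and lim_λ μ(Λ_λ Δ (Λ_λ g))/μ(Λ_λ) = 0 for all g ∈ G), then the averages (1/μ(Λ_λ)) ∫_{Λ_λ} U_g (x − U_h x) dμ(g) converge to 0 in norm. -/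
open Filter MeasureTheory
open scoped Topology ENNReal

theorem aux_key_bound
    {G : Type*} [Group G] [TopologicalSpace G] [IsTopologicalGroup G]
    [MeasurableSpace G] [BorelSpace G]
    (μ : Measure G) [μ.IsMulRightInvariant]
    {H : Type*} [NormedAddCommGroup H] [InnerProductSpace ℂ H] [CompleteSpace H]
    (U : G → H →L[ℂ] H)
    (hUcontr : ∀ g, ‖U g‖ ≤ 1)
    (hUmul : ∀ g h : G, U g ∘L U h = U (g * h))
    (hUmeas : ∀ x : H, StronglyMeasurable fun g => U g x)
    (x : H) (h : G) (Λ : Set G) (hΛ : MeasurableSet Λ) (hfin : μ Λ < ∞) :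
    ‖∫ g in Λ, U g (x - U h x) ∂μ‖ ≤
      ‖x‖ * (μ (symmDiff Λ ((· * h) '' Λ))).toReal := by
  set f : G → H := fun g => U g x with hf
  have hb : ∀ g, ‖f g‖ ≤ ‖x‖ := fun g =>
    ((U g).le_opNorm x).trans (mul_le_of_le_one_left (norm_nonneg x) (hUcontr g))
  have hfm : StronglyMeasurable f := hUmeas x
  have hint : ∀ {s : Set G}, μ s < ∞ → IntegrableOn f s μ := fun {s} hs =>
    Integrable.mono' (integrableOn_const (C := ‖x‖) hs.ne) hfm.aestronglyMeasurable
      (Filter.Eventually.of_forall hb)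
  -- image set
  set B : Set G := (· * h) '' Λ with hB
  have hemb : MeasurableEmbedding (fun g : G => g * h) :=
    (MeasurableEquiv.mulRight h).measurableEmbedding
  have hmp : MeasurePreserving (fun g : G => g * h) μ μ := measurePreserving_mul_right μ h
  have hBm : MeasurableSet B := hemb.measurableSet_image.mpr hΛ
  have hBfin : μ B < ∞ := by
    rw [hB, ← MeasurePreserving.measure_preimage_emb hmp hemb]
    simpa using hfin
  -- step 1: pointwise rewrite
  have e1 : ∀ g, U g (x - U h x) = f g - f (g * h) := by
    intro g
    have : U g (U h x) = U (g * h) x := by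
      rw [← hUmul g h]; rfl
    simp [hf, map_sub, this]
  have e2 : (∫ g in Λ, U g (x - U h x) ∂μ) = (∫ g in Λ, f g ∂μ) - ∫ g in B, f g ∂μ := by
    have himg : (∫ g in B, f g ∂μ) = ∫ g in Λ, f (g * h) ∂μ :=
      hmp.setIntegral_image_emb hemb f Λ
    have hfm' : StronglyMeasurable (fun g => f (g * h)) :=
      hfm.comp_measurable (measurable_mul_const h)
    have hint2 : IntegrableOn (fun g => f (g * h)) Λ μ :=
      Integrable.mono' (integrableOn_const (C := ‖x‖) hfin.ne) hfm'.aestronglyMeasurable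
        (Filter.Eventually.of_forall fun g => hb _)
    rw [himg, ← integral_sub (hint hfin) hint2]
    exact setIntegral_congr_fun hΛ fun g _ => e1 g
  -- step 2: difference of set integrals over A, B equals over A\B minus B\A
  have e3 : (∫ g in Λ, f g ∂μ) - (∫ g in B, f g ∂μ) =
      (∫ g in Λ \ B, f g ∂μ) - ∫ g in B \ Λ, f g ∂μ := by
    have hA : (∫ g in Λ, f g ∂μ) = (∫ g in Λ \ B, f g ∂μ) + ∫ g in Λ ∩ B, f g ∂μ := by
      rw [← setIntegral_union (disjoint_sdiff_self_left.mono_right Set.inter_subset_right) (hΛ.inter hBm)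
        (hint (lt_of_le_of_lt (measure_mono Set.diff_subset) hfin))
        (hint (lt_of_le_of_lt (measure_mono Set.inter_subset_left) hfin)),
        Set.diff_union_inter]
    have hBeq : (∫ g in B, f g ∂μ) = (∫ g in B \ Λ, f g ∂μ) + ∫ g in B ∩ Λ, f g ∂μ := by
      rw [← setIntegral_union (disjoint_sdiff_self_left.mono_right Set.inter_subset_right) (hBm.inter hΛ)
        (hint (lt_of_le_of_lt (measure_mono Set.diff_subset) hBfin))
        (hint (lt_of_le_of_lt (measure_mono Set.inter_subset_left) hBfin)),
        Set.diff_union_inter]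
    rw [hA, hBeq, Set.inter_comm B Λ]
    abel
  rw [e2, e3]
  have n1 : ‖∫ g in Λ \ B, f g ∂μ‖ ≤ ‖x‖ * (μ (Λ \ B)).toReal :=
    norm_setIntegral_le_of_norm_le_const (lt_of_le_of_lt (measure_mono Set.diff_subset) hfin)
      (fun g _ => hb g)
  have n2 : ‖∫ g in B \ Λ, f g ∂μ‖ ≤ ‖x‖ * (μ (B \ Λ)).toReal :=
    norm_setIntegral_le_of_norm_le_const (lt_of_le_of_lt (measure_mono Set.diff_subset) hBfin)
      (fun g _ => hb g)
  have hmeq : μ (symmDiff Λ B) = μ (Λ \ B) + μ (B \ Λ) := by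
    rw [Set.symmDiff_def, measure_union (disjoint_sdiff_sdiff) (hBm.diff hΛ)]
  have hfin1 : μ (Λ \ B) ≠ ∞ := (lt_of_le_of_lt (measure_mono Set.diff_subset) hfin).ne
  have hfin2 : μ (B \ Λ) ≠ ∞ := (lt_of_le_of_lt (measure_mono Set.diff_subset) hBfin).ne
  calc ‖(∫ g in Λ \ B, f g ∂μ) - ∫ g in B \ Λ, f g ∂μ‖
      ≤ ‖∫ g in Λ \ B, f g ∂μ‖ + ‖∫ g in B \ Λ, f g ∂μ‖ := norm_sub_le _ _
    _ ≤ ‖x‖ * (μ (Λ \ B)).toReal + ‖x‖ * (μ (B \ Λ)).toReal := add_le_add n1 n2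
    _ = ‖x‖ * (μ (symmDiff Λ B)).toReal := by
        rw [hmeq, ENNReal.toReal_add hfin1 hfin2]; ring

/-- For a right-Haar measure `μ` on a locally compact Hausdorff group `G` and a
strongly measurable contraction representation `U` on a complex Hilbert space `H`:
(i) `‖∫_Λ U_g (x - U_h x) dμ(g)‖ ≤ ‖x‖ · μ(Λ Δ Λh)` for every `x`, `h` and Borel
set `Λ` of finite measure; (ii) consequently, along any Følner net `(Λ_λ)` the
averages `(1/μ(Λ_λ)) ∫_{Λ_λ} U_g (x - U_h x) dμ(g)` converge to `0` in norm. -/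
theorem norm_setIntegral_sub_le_and_folner_average_tendsto_zero
    {G : Type*} [Group G] [TopologicalSpace G] [IsTopologicalGroup G]
    [LocallyCompactSpace G] [T2Space G] [MeasurableSpace G] [BorelSpace G]
    (μ : Measure G) [μ.Regular] [μ.IsMulRightInvariant] (hμ : μ ≠ 0)
    {H : Type*} [NormedAddCommGroup H] [InnerProductSpace ℂ H] [CompleteSpace H]
    (U : G → H →L[ℂ] H)
    (hUcontr : ∀ g, ‖U g‖ ≤ 1)
    (hUmul : ∀ g h : G, U g ∘L U h = U (g * h))
    (hUmeas : ∀ x : H, StronglyMeasurable fun g => U g x) :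
    (∀ (x : H) (h : G) (Λ : Set G), MeasurableSet Λ → μ Λ < ∞ →
      ‖∫ g in Λ, U g (x - U h x) ∂μ‖ ≤
        ‖x‖ * (μ (symmDiff Λ ((· * h) '' Λ))).toReal) ∧
    (∀ (ι : Type) [Preorder ι] [IsDirected ι (· ≤ ·)] [Nonempty ι]
        (Λ : ι → Set G), (∀ i, MeasurableSet (Λ i)) →
      (∀ i, 0 < μ (Λ i)) → (∀ i, μ (Λ i) < ∞) →
      (∀ g : G, Tendsto (fun i => μ (symmDiff (Λ i) ((· * g) '' Λ i)) / μ (Λ i))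
          atTop (𝓝 0)) →
      ∀ (x : H) (h : G),
        Tendsto (fun i => (μ (Λ i)).toReal⁻¹ • ∫ g in Λ i, U g (x - U h x) ∂μ)
          atTop (𝓝 (0 : H))) := by
  constructor
  · intro x h Λ hΛ hfin
    exact aux_key_bound μ U hUcontr hUmul hUmeas x h Λ hΛ hfin
  · intro ι _ _ _ Λ hmeas hpos hfin hFol x h
    have key : ∀ i, ‖(μ (Λ i)).toReal⁻¹ • ∫ g in Λ i, U g (x - U h x) ∂μ‖ ≤
        ‖x‖ * (μ (symmDiff (Λ i) ((· * h) '' Λ i)) / μ (Λ i)).toReal := by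
      intro i
      have hb := aux_key_bound μ U hUcontr hUmul hUmeas x h (Λ i) (hmeas i) (hfin i)
      have hc : (0:ℝ) < (μ (Λ i)).toReal := ENNReal.toReal_pos (hpos i).ne' (hfin i).ne
      rw [norm_smul, norm_inv, Real.norm_eq_abs, abs_of_pos hc, ENNReal.toReal_div]
      calc (μ (Λ i)).toReal⁻¹ * ‖∫ g in Λ i, U g (x - U h x) ∂μ‖
          ≤ (μ (Λ i)).toReal⁻¹ *
            (‖x‖ * (μ (symmDiff (Λ i) ((· * h) '' Λ i))).toReal) :=
            mul_le_mul_of_nonneg_left hb (by positivity)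
        _ = ‖x‖ * ((μ (symmDiff (Λ i) ((· * h) '' Λ i))).toReal /
              (μ (Λ i)).toReal) := by ring
    have hlim : Tendsto (fun i => ‖x‖ *
        (μ (symmDiff (Λ i) ((· * h) '' Λ i)) / μ (Λ i)).toReal) atTop (𝓝 0) := by
      have h0 : Tendsto (fun i =>
          (μ (symmDiff (Λ i) ((· * h) '' Λ i)) / μ (Λ i)).toReal) atTop (𝓝 0) := by
        have := (ENNReal.tendsto_toReal (by simp : (0:ℝ≥0∞) ≠ ∞)).comp (hFol h)
        simpa only [Function.comp_def, ENNReal.toReal_zero] using this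
      simpa using h0.const_mul ‖x‖
    exact squeeze_zero_norm key hlim
end
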